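/- Let S be a finite type, π : S → ℝ with π(s) > 0 for all s and ∑ π = 1, and let x, y, z, w ∈ S be pairwise distinct. Define the Lake linear functional H₁ on vectors v : (Fin 4 → S) → ℝ by H₁(v) = ṽ(x,y,x,y) + ṽ(x,y,z,w) − ṽ(x,y,z,y) − ṽ(x,y,x,w), where ṽ(χ) = v(χ)/(π(χ 0)π(χ 1)π(χ 2)π(χ 3)). Then H₁(q_σ) = 0 for every set partition σ of Fin 4 with σ ≠ {{0,2},{1,3}}, while H₁(q_{{{0,2},{1,3}}}) = 1/(π(x)π(y)) ≠ 0. In particular H₁ is a linear phylogenetic invariant for the quartet tree 12|34 (it vanishes at q_σ for every σ convex on 12|34) but is not a phylogenetic invariant for the quartet tree 13|24, so H₁ is a linear topology invariant for the equal input model with κ ≥ 4 states. -/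

import Mathlib

/-- The point `q_σ` of the equal input / random cluster model associated with a
set partition `σ` of `Fin n`. -/
noncomputable def qpt {n : ℕ} {S : Type*} [Fintype S] [DecidableEq S] (π : S → ℝ)
    (σ : Finpartition (Finset.univ : Finset (Fin n))) (χ : Fin n → S) : ℝ :=
  if ∀ B ∈ σ.parts, ∀ i ∈ B, ∀ j ∈ B, χ i = χ j then
    ∏ B ∈ σ.parts.attach,
      π (χ ((B : Finset (Fin n)).min' (σ.nonempty_of_mem_parts B.2)))
  else 0

/-- Normalized coordinate of a vector `v : (Fin 4 → S) → ℝ`. -/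
noncomputable def ntilde {S : Type*} (π : S → ℝ) (v : (Fin 4 → S) → ℝ)
    (χ : Fin 4 → S) : ℝ :=
  v χ / (π (χ 0) * π (χ 1) * π (χ 2) * π (χ 3))

/-- The Lake linear functional `H₁` for the quartet tree `12|34`. -/
noncomputable def lakeH1 {S : Type*} (π : S → ℝ) (x y z w : S)
    (v : (Fin 4 → S) → ℝ) : ℝ :=
  ntilde π v ![x, y, x, y] + ntilde π v ![x, y, z, w]
    - ntilde π v ![x, y, z, y] - ntilde π v ![x, y, x, w]

open Finset

lemma qpt_eq' {S : Type*} [Fintype S] [DecidableEq S] (π : S → ℝ)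
    (σ : Finpartition (Finset.univ : Finset (Fin 4))) (χ : Fin 4 → S) :
    qpt π σ χ = if ∀ B ∈ σ.parts, ∀ i ∈ B, ∀ j ∈ B, χ i = χ j then
      ∏ B ∈ σ.parts, (if h : B.Nonempty then π (χ (B.min' h)) else 1) else 0 := by
  unfold qpt
  split
  · rw [← Finset.prod_attach σ.parts (fun B => if h : B.Nonempty then π (χ (B.min' h)) else 1)]
    exact Finset.prod_congr rfl fun B _ => by rw [dif_pos (σ.nonempty_of_mem_parts B.2)]
  · rfl

lemma condP1 {S : Type*} (χ : Fin 4 → S) :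
    (∀ B ∈ ({({0}:Finset (Fin 4)), {1}, {2}, {3}} : Finset (Finset (Fin 4))),
      ∀ i ∈ B, ∀ j ∈ B, χ i = χ j) ↔ True := by
  simp [Finset.forall_mem_insert]

lemma condP2 {S : Type*} (χ : Fin 4 → S) :
    (∀ B ∈ ({({0,2}:Finset (Fin 4)), {1}, {3}} : Finset (Finset (Fin 4))),
      ∀ i ∈ B, ∀ j ∈ B, χ i = χ j) ↔ χ 0 = χ 2 := by
  simp [Finset.forall_mem_insert]
  exact fun h => h.symm

lemma condP3 {S : Type*} (χ : Fin 4 → S) :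
    (∀ B ∈ ({({0}:Finset (Fin 4)), {2}, {1,3}} : Finset (Finset (Fin 4))),
      ∀ i ∈ B, ∀ j ∈ B, χ i = χ j) ↔ χ 1 = χ 3 := by
  simp [Finset.forall_mem_insert]
  exact fun h => h.symm

lemma condP4 {S : Type*} (χ : Fin 4 → S) :
    (∀ B ∈ ({({0,2}:Finset (Fin 4)), {1,3}} : Finset (Finset (Fin 4))),
      ∀ i ∈ B, ∀ j ∈ B, χ i = χ j) ↔ χ 0 = χ 2 ∧ χ 1 = χ 3 := by
  simp [Finset.forall_mem_insert]
  exact ⟨fun h => ⟨h.1.1, h.2.1⟩, fun h => ⟨⟨h.1, h.1.symm⟩, h.2, h.2.symm⟩⟩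

lemma min02 : ∀ h, ({0,2} : Finset (Fin 4)).min' h = 0 :=
  fun _ => le_antisymm (Finset.min'_le _ _ (by decide)) (Fin.zero_le _)

lemma min13 : ∀ h, ({1,3} : Finset (Fin 4)).min' h = 1 :=
  fun _ => le_antisymm (Finset.min'_le _ _ (by decide)) (Finset.le_min' _ _ _ (by decide))

lemma qptP1 {S : Type*} [Fintype S] [DecidableEq S] (π : S → ℝ)
    (σ : Finpartition (Finset.univ : Finset (Fin 4)))
    (hP : σ.parts = ({({0}:Finset (Fin 4)), {1}, {2}, {3}} : Finset (Finset (Fin 4))))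
    (χ : Fin 4 → S) :
    qpt π σ χ = π (χ 0) * π (χ 1) * π (χ 2) * π (χ 3) := by
  rw [qpt_eq', hP, if_pos ((condP1 χ).mpr trivial),
    Finset.prod_insert (by decide), Finset.prod_insert (by decide),
    Finset.prod_insert (by decide), Finset.prod_singleton,
    dif_pos (Finset.singleton_nonempty _), dif_pos (Finset.singleton_nonempty _),
    dif_pos (Finset.singleton_nonempty _), dif_pos (Finset.singleton_nonempty _)]
  simp [Finset.min'_singleton]
  ring

lemma qptP2 {S : Type*} [Fintype S] [DecidableEq S] (π : S → ℝ)
    (σ : Finpartition (Finset.univ : Finset (Fin 4)))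
    (hP : σ.parts = ({({0,2}:Finset (Fin 4)), {1}, {3}} : Finset (Finset (Fin 4))))
    (χ : Fin 4 → S) :
    qpt π σ χ = if χ 0 = χ 2 then π (χ 0) * π (χ 1) * π (χ 3) else 0 := by
  rw [qpt_eq', hP]
  by_cases h : χ 0 = χ 2
  · rw [if_pos ((condP2 χ).mpr h), if_pos h,
      Finset.prod_insert (by decide), Finset.prod_insert (by decide), Finset.prod_singleton,
      dif_pos (Finset.insert_nonempty _ _), dif_pos (Finset.singleton_nonempty _),
      dif_pos (Finset.singleton_nonempty _), min02]
    simp [Finset.min'_singleton]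
    ring
  · rw [if_neg (fun hc => h ((condP2 χ).mp hc)), if_neg h]

lemma qptP3 {S : Type*} [Fintype S] [DecidableEq S] (π : S → ℝ)
    (σ : Finpartition (Finset.univ : Finset (Fin 4)))
    (hP : σ.parts = ({({0}:Finset (Fin 4)), {2}, {1,3}} : Finset (Finset (Fin 4))))
    (χ : Fin 4 → S) :
    qpt π σ χ = if χ 1 = χ 3 then π (χ 0) * π (χ 1) * π (χ 2) else 0 := by
  rw [qpt_eq', hP]
  by_cases h : χ 1 = χ 3
  · rw [if_pos ((condP3 χ).mpr h), if_pos h,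
      Finset.prod_insert (by decide), Finset.prod_insert (by decide), Finset.prod_singleton,
      dif_pos (Finset.singleton_nonempty _), dif_pos (Finset.singleton_nonempty _),
      dif_pos (Finset.insert_nonempty _ _), min13]
    simp [Finset.min'_singleton]
    ring
  · rw [if_neg (fun hc => h ((condP3 χ).mp hc)), if_neg h]

lemma qptP4 {S : Type*} [Fintype S] [DecidableEq S] (π : S → ℝ)
    (σ : Finpartition (Finset.univ : Finset (Fin 4)))
    (hP : σ.parts = ({({0,2}:Finset (Fin 4)), {1,3}} : Finset (Finset (Fin 4))))
    (χ : Fin 4 → S) :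
    qpt π σ χ = if χ 0 = χ 2 ∧ χ 1 = χ 3 then π (χ 0) * π (χ 1) else 0 := by
  rw [qpt_eq', hP]
  by_cases h : χ 0 = χ 2 ∧ χ 1 = χ 3
  · rw [if_pos ((condP4 χ).mpr h), if_pos h,
      Finset.prod_insert (by decide), Finset.prod_singleton,
      dif_pos (Finset.insert_nonempty _ _), dif_pos (Finset.insert_nonempty _ _), min02, min13]
  · rw [if_neg (fun hc => h ((condP4 χ).mp hc)), if_neg h]

lemma classify (σ : Finpartition (Finset.univ : Finset (Fin 4))) :
    (∃ B ∈ σ.parts, ∃ i ∈ B, ∃ j ∈ B,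
        i ∈ ({0,2} : Finset (Fin 4)) ∧ j ∈ ({1,3} : Finset (Fin 4))) ∨
    σ.parts = ({({0}:Finset (Fin 4)), {1}, {2}, {3}} : Finset (Finset (Fin 4))) ∨
    σ.parts = ({({0,2}:Finset (Fin 4)), {1}, {3}} : Finset (Finset (Fin 4))) ∨
    σ.parts = ({({0}:Finset (Fin 4)), {2}, {1,3}} : Finset (Finset (Fin 4))) ∨
    σ.parts = ({({0,2}:Finset (Fin 4)), {1,3}} : Finset (Finset (Fin 4))) := by
  by_cases hM : ∃ B ∈ σ.parts, ∃ i ∈ B, ∃ j ∈ B,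
      i ∈ ({0,2} : Finset (Fin 4)) ∧ j ∈ ({1,3} : Finset (Fin 4))
  · exact Or.inl hM
  right
  push_neg at hM
  -- every part is a subset of {0,2} or of {1,3}
  have hsub : ∀ B ∈ σ.parts, ∀ i ∈ B, i ∈ ({0,2} : Finset (Fin 4)) →
      B ⊆ ({0,2} : Finset (Fin 4)) := by
    intro B hB i hi hi2 j hj
    have h := hM B hB i hi j hj hi2
    fin_cases j
    · decide
    · exact absurd (by decide) h
    · decide
    · exact absurd (by decide) h
  have hsub' : ∀ B ∈ σ.parts, ∀ i ∈ B, i ∈ ({1,3} : Finset (Fin 4)) →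
      B ⊆ ({1,3} : Finset (Fin 4)) := by
    intro B hB i hi hi2 j hj
    by_contra hj2
    have hj' : j ∈ ({0,2} : Finset (Fin 4)) := by
      fin_cases j
      · decide
      · exact absurd (by decide) hj2
      · decide
      · exact absurd (by decide) hj2
    exact hM B hB j hj i hi hj' hi2
  obtain ⟨B0, hB0, h0⟩ := σ.exists_mem (Finset.mem_univ (0 : Fin 4))
  obtain ⟨B1, hB1, h1⟩ := σ.exists_mem (Finset.mem_univ (1 : Fin 4))
  obtain ⟨B2, hB2, h2⟩ := σ.exists_mem (Finset.mem_univ (2 : Fin 4))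
  obtain ⟨B3, hB3, h3⟩ := σ.exists_mem (Finset.mem_univ (3 : Fin 4))
  have hB0sub : B0 ⊆ ({0,2} : Finset (Fin 4)) := hsub B0 hB0 0 h0 (by decide)
  have hB2sub : B2 ⊆ ({0,2} : Finset (Fin 4)) := hsub B2 hB2 2 h2 (by decide)
  have hB1sub : B1 ⊆ ({1,3} : Finset (Fin 4)) := hsub' B1 hB1 1 h1 (by decide)
  have hB3sub : B3 ⊆ ({1,3} : Finset (Fin 4)) := hsub' B3 hB3 3 h3 (by decide)
  have parts_eq : σ.parts = {B0, B1, B2, B3} := by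
    apply Finset.Subset.antisymm
    · intro B hB
      obtain ⟨i, hi⟩ := σ.nonempty_of_mem_parts hB
      fin_cases i
      · simp [σ.eq_of_mem_parts hB hB0 hi h0]
      · simp [σ.eq_of_mem_parts hB hB1 hi h1]
      · simp [σ.eq_of_mem_parts hB hB2 hi h2]
      · simp [σ.eq_of_mem_parts hB hB3 hi h3]
    · intro B hB
      simp only [Finset.mem_insert, Finset.mem_singleton] at hB
      rcases hB with rfl | rfl | rfl | rfl <;> assumption
  have e0 : B0 = {0} ∨ B0 = {0, 2} := by
    by_cases h02 : (2 : Fin 4) ∈ B0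
    · right
      apply Finset.Subset.antisymm hB0sub
      intro j hj
      simp only [Finset.mem_insert, Finset.mem_singleton] at hj
      rcases hj with rfl | rfl
      · exact h0
      · exact h02
    · left
      apply Finset.Subset.antisymm
      · intro j hj
        have := hB0sub hj
        simp only [Finset.mem_insert, Finset.mem_singleton] at this ⊢
        rcases this with rfl | rfl
        · rfl
        · exact absurd hj h02
      · intro j hj
        simp only [Finset.mem_singleton] at hj
        subst hj; exact h0
  have e1 : B1 = {1} ∨ B1 = {1, 3} := by
    by_cases h13 : (3 : Fin 4) ∈ B1
    · right
      apply Finset.Subset.antisymm hB1sub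
      intro j hj
      simp only [Finset.mem_insert, Finset.mem_singleton] at hj
      rcases hj with rfl | rfl
      · exact h1
      · exact h13
    · left
      apply Finset.Subset.antisymm
      · intro j hj
        have := hB1sub hj
        simp only [Finset.mem_insert, Finset.mem_singleton] at this ⊢
        rcases this with rfl | rfl
        · rfl
        · exact absurd hj h13
      · intro j hj
        simp only [Finset.mem_singleton] at hj
        subst hj; exact h1
  rcases e0 with e0 | e0 <;> rcases e1 with e1 | e1
  · -- B0 = {0}, B1 = {1}; then B2 = {2}, B3 = {3}
    have eB2 : B2 = {2} := by
      have h0n : (0 : Fin 4) ∉ B2 := fun h0' => by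
        have := σ.eq_of_mem_parts hB2 hB0 h0' h0
        rw [this, e0] at h2; exact absurd h2 (by decide)
      apply Finset.Subset.antisymm
      · intro j hj
        have := hB2sub hj
        simp only [Finset.mem_insert, Finset.mem_singleton] at this ⊢
        rcases this with rfl | rfl
        · exact absurd hj h0n
        · rfl
      · intro j hj
        simp only [Finset.mem_singleton] at hj
        subst hj; exact h2
    have eB3 : B3 = {3} := by
      have h1n : (1 : Fin 4) ∉ B3 := fun h1' => by
        have := σ.eq_of_mem_parts hB3 hB1 h1' h1
        rw [this, e1] at h3; exact absurd h3 (by decide)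
      apply Finset.Subset.antisymm
      · intro j hj
        have := hB3sub hj
        simp only [Finset.mem_insert, Finset.mem_singleton] at this ⊢
        rcases this with rfl | rfl
        · exact absurd hj h1n
        · rfl
      · intro j hj
        simp only [Finset.mem_singleton] at hj
        subst hj; exact h3
    left
    rw [parts_eq, e0, e1, eB2, eB3] <;> decide
  · -- B0 = {0}, B1 = {1,3}; then B2 = {2}, B3 = B1
    have eB2 : B2 = {2} := by
      have h0n : (0 : Fin 4) ∉ B2 := fun h0' => by
        have := σ.eq_of_mem_parts hB2 hB0 h0' h0
        rw [this, e0] at h2; exact absurd h2 (by decide)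
      apply Finset.Subset.antisymm
      · intro j hj
        have := hB2sub hj
        simp only [Finset.mem_insert, Finset.mem_singleton] at this ⊢
        rcases this with rfl | rfl
        · exact absurd hj h0n
        · rfl
      · intro j hj
        simp only [Finset.mem_singleton] at hj
        subst hj; exact h2
    have eB3 : B3 = B1 := σ.eq_of_mem_parts hB3 hB1 h3 (by rw [e1]; decide)
    right; right; left
    rw [parts_eq, e0, eB2, eB3, e1] <;> decide
  · -- B0 = {0,2}, B1 = {1}; then B2 = B0, B3 = {3}
    have eB2 : B2 = B0 := σ.eq_of_mem_parts hB2 hB0 h2 (by rw [e0]; decide)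
    have eB3 : B3 = {3} := by
      have h1n : (1 : Fin 4) ∉ B3 := fun h1' => by
        have := σ.eq_of_mem_parts hB3 hB1 h1' h1
        rw [this, e1] at h3; exact absurd h3 (by decide)
      apply Finset.Subset.antisymm
      · intro j hj
        have := hB3sub hj
        simp only [Finset.mem_insert, Finset.mem_singleton] at this ⊢
        rcases this with rfl | rfl
        · exact absurd hj h1n
        · rfl
      · intro j hj
        simp only [Finset.mem_singleton] at hj
        subst hj; exact h3
    right; left
    rw [parts_eq, e0, e1, eB2, e0, eB3] <;> decide
  · -- B0 = {0,2}, B1 = {1,3}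
    have eB2 : B2 = B0 := σ.eq_of_mem_parts hB2 hB0 h2 (by rw [e0]; decide)
    have eB3 : B3 = B1 := σ.eq_of_mem_parts hB3 hB1 h3 (by rw [e1]; decide)
    right; right; right
    rw [parts_eq, e0, e1, eB2, e0, eB3, e1] <;> decide


/-- the Lake functional `H₁` vanishes at `q_σ` for every set
partition `σ` of `Fin 4` other than `{{0,2},{1,3}}`, and takes the nonzero value
`1/(π x * π y)` on `q_{{{0,2},{1,3}}}`; hence it is a linear phylogenetic
invariant for the quartet tree `12|34` but not for `13|24`, i.e. a linear
topology invariant for the equal input model with at least 4 states. -/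
theorem ei_lake_topology_invariant {S : Type*} [Fintype S] [DecidableEq S]
    (π : S → ℝ) (hpos : ∀ s, 0 < π s) (hsum : ∑ s, π s = 1)
    (x y z w : S)
    (hd : x ≠ y ∧ x ≠ z ∧ x ≠ w ∧ y ≠ z ∧ y ≠ w ∧ z ≠ w) :
    (∀ σ : Finpartition (Finset.univ : Finset (Fin 4)),
      σ.parts ≠ ({({0, 2} : Finset (Fin 4)), ({1, 3} : Finset (Fin 4))} :
        Finset (Finset (Fin 4))) →
      lakeH1 π x y z w (qpt π σ) = 0) ∧
    (∀ σ : Finpartition (Finset.univ : Finset (Fin 4)),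
      σ.parts = ({({0, 2} : Finset (Fin 4)), ({1, 3} : Finset (Fin 4))} :
        Finset (Finset (Fin 4))) →
      lakeH1 π x y z w (qpt π σ) = 1 / (π x * π y)) ∧
    1 / (π x * π y) ≠ 0 := by
  obtain ⟨h1, h2, h3, h4, h5, h6⟩ := hd
  have hx := (hpos x).ne'
  have hy := (hpos y).ne'
  have hz := (hpos z).ne'
  have hw := (hpos w).ne'
  refine ⟨?_, ?_, one_div_ne_zero (mul_ne_zero hx hy)⟩
  · intro σ hσ
    rcases classify σ with hM | hP | hP | hP | hP
    · -- a mixed pair kills all four coordinates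
      obtain ⟨B, hB, i, hi, j, hj, hi2, hj2⟩ := hM
      have hz0 : ∀ χ : Fin 4 → S, χ i ≠ χ j → qpt π σ χ = 0 := by
        intro χ hne
        unfold qpt
        exact if_neg (fun hc => hne (hc B hB i hi j hj))
      simp only [Finset.mem_insert, Finset.mem_singleton] at hi2 hj2
      have z1 : qpt π σ ![x,y,x,y] = 0 := hz0 _ (by
        rcases hi2 with rfl | rfl <;> rcases hj2 with rfl | rfl <;>
          simp [h1, h2, h3, h4, h5, h6])
      have z2 : qpt π σ ![x,y,z,w] = 0 := hz0 _ (by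
        rcases hi2 with rfl | rfl <;> rcases hj2 with rfl | rfl <;>
          simp [h1, h2, h3, h4, h5, h6, h4.symm, h2.symm])
      have z3 : qpt π σ ![x,y,z,y] = 0 := hz0 _ (by
        rcases hi2 with rfl | rfl <;> rcases hj2 with rfl | rfl <;>
          simp [h1, h2, h3, h4, h5, h6, h4.symm, h2.symm])
      have z4 : qpt π σ ![x,y,x,w] = 0 := hz0 _ (by
        rcases hi2 with rfl | rfl <;> rcases hj2 with rfl | rfl <;>
          simp [h1, h2, h3, h4, h5, h6])
      simp [lakeH1, ntilde, z1, z2, z3, z4]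
    · simp only [lakeH1, ntilde, qptP1 π σ hP, Matrix.cons_val_zero, Matrix.cons_val_one,
        Matrix.head_cons, Matrix.cons_val_two, Matrix.cons_val_three, Matrix.tail_cons]
      field_simp
      ring
    · simp only [lakeH1, ntilde, qptP2 π σ hP, Matrix.cons_val_zero, Matrix.cons_val_one,
        Matrix.head_cons, Matrix.cons_val_two, Matrix.cons_val_three, Matrix.tail_cons]
      rw [if_pos trivial, if_neg h2, if_neg h2, if_pos trivial]
      field_simp
      ring
    · simp only [lakeH1, ntilde, qptP3 π σ hP, Matrix.cons_val_zero, Matrix.cons_val_one,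
        Matrix.head_cons, Matrix.cons_val_two, Matrix.cons_val_three, Matrix.tail_cons]
      rw [if_pos trivial, if_neg h5, if_pos trivial, if_neg h5]
      field_simp
      ring
    · exact absurd hP hσ
  · intro σ hP
    simp only [lakeH1, ntilde, qptP4 π σ hP, Matrix.cons_val_zero, Matrix.cons_val_one,
      Matrix.head_cons, Matrix.cons_val_two, Matrix.cons_val_three, Matrix.tail_cons]
    rw [if_pos ⟨trivial, trivial⟩, if_neg (fun h => h2 h.1), if_neg (fun h => h2 h.1),
      if_neg (fun h => h5 h.2)]
    field_simp
    ring
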